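/- Let d≥1, N>0, β>0 and let U be a nice weight function. Then for every finite K⊂ℤ^d and every pair of vertices o,y∈K with r:=d(o,y) the graph distance in ℤ^d, the connection probability of the random walk loop soup on G_K satisfies 𝒫_{G_K,U,N,β}(o↔y) ≤ (N/2)·Σ_{k≥r} (2dβ)^k·χ_U(k). -/

import Mathlib

open scoped BigOperators ENNReal NNReal

namespace RWLS

variable {V : Type*}

/-- A rooted oriented loop, encoded as the full vertex sequence `(ℓ(0),…,ℓ(k))` with `k ≥ 1`,
consecutive vertices adjacent, and `ℓ(k) = ℓ(0)`. -/
def IsLoopSeq (G : SimpleGraph V) (l : List V) : Prop :=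
  2 ≤ l.length ∧ List.Chain' G.Adj l ∧ l.getLast? = l.head?

/-- Rooted oriented loops of a graph. -/
def Loop (G : SimpleGraph V) : Type _ := {l : List V // IsLoopSeq G l}

/-- The length `|ℓ| = k` of a rooted oriented loop. -/
def Loop.len {G : SimpleGraph V} (ℓ : Loop G) : ℕ := ℓ.val.length - 1

/-- The core `(ℓ(0),…,ℓ(k−1))` of a loop. -/
def Loop.core {G : SimpleGraph V} (ℓ : Loop G) : List V := ℓ.val.dropLast

/-- `ℓ(i)`, the `i`-th vertex of a loop (read cyclically). -/
def Loop.vert {G : SimpleGraph V} (ℓ : Loop G) (i : ℕ) : V :=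
  ℓ.core.get ⟨i % ℓ.core.length, Nat.mod_lt _ (by
    have h := ℓ.prop.1
    simp only [Loop.core, List.length_dropLast]
    omega)⟩

/-- Number of visits of the loop at `x` (the final time `k` is not counted). -/
def Loop.nx [DecidableEq V] {G : SimpleGraph V} (ℓ : Loop G) (x : V) : ℕ := ℓ.core.count x

/-- Configurations of the random walk loop soup:
finite ordered tuples of rooted oriented loops. -/
abbrev Config (G : SimpleGraph V) := List (Loop G)

/-- The local time of a configuration at `x`. -/
def locTime [DecidableEq V] {G : SimpleGraph V} (ω : Config G) (x : V) : ℕ :=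
  (ω.map fun ℓ => ℓ.nx x).sum

/-- The (unnormalised) weight of a configuration in the random walk loop soup. -/
noncomputable def weight [Fintype V] [DecidableEq V] (G : SimpleGraph V) (U : ℕ → ℝ)
    (N β : ℝ) (ω : Config G) : ℝ :=
  (1 / (Nat.factorial ω.length : ℝ)) * (N / 2) ^ ω.length *
    (ω.map fun ℓ => β ^ ℓ.len / (ℓ.len : ℝ)).prod * ∏ x : V, U (locTime ω x)

/-- The partition function of the random walk loop soup. -/
noncomputable def Z [Fintype V] [DecidableEq V] (G : SimpleGraph V) (U : ℕ → ℝ)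
    (N β : ℝ) : ℝ :=
  ∑' ω : Config G, weight G U N β ω

/-- The probability of an event under the random walk loop soup measure. -/
noncomputable def prob [Fintype V] [DecidableEq V] (G : SimpleGraph V) (U : ℕ → ℝ) (N β : ℝ)
    (A : Set (Config G)) : ℝ :=
  (∑' ω : A, weight G U N β (ω : Config G)) / Z G U N β

/-- The expectation of a function under the random walk loop soup measure. -/
noncomputable def expect [Fintype V] [DecidableEq V] (G : SimpleGraph V) (U : ℕ → ℝ) (N β : ℝ)
    (f : Config G → ℝ) : ℝ :=
  (∑' ω : Config G, f ω * weight G U N β ω) / Z G U N β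

/-- `U` is `M`-good: `U n ≤ (M/n) · U (n-1)` for all `n ≥ 1`. -/
def MGood (M : ℕ) (U : ℕ → ℝ) : Prop := ∀ n : ℕ, 1 ≤ n → U n ≤ ((M : ℝ) / n) * U (n - 1)

/-- `U` is good: `M`-good for some `M ∈ ℕ`. -/
def Good (U : ℕ → ℝ) : Prop := ∃ M : ℕ, 1 ≤ M ∧ MGood M U

/-- `U` takes non-negative values (it is a weight function). -/
def WeightFn (U : ℕ → ℝ) : Prop := ∀ n, 0 ≤ U n

/-- `U` is nice: non-negative, good, `U 0 = 1`, `U ≤ 1`, and submultiplicative. -/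
def Nice (U : ℕ → ℝ) : Prop :=
  WeightFn U ∧ Good U ∧ U 0 = 1 ∧ (∀ n, U n ≤ 1) ∧ ∀ m n : ℕ, U (m + n) ≤ U m * U n

/-- The event that some loop of the configuration visits both `x` and `y`. -/
def connEvent {G : SimpleGraph V} (x y : V) : Set (Config G) :=
  {ω | ∃ ℓ ∈ ω, x ∈ ℓ.val ∧ y ∈ ℓ.val}

end RWLS
namespace RWLS

/-- The nearest-neighbour lattice graph on `ℤ^d`. -/
def lattice (d : ℕ) : SimpleGraph (Fin d → ℤ) where
  Adj x y := ∑ i, |x i - y i| = 1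
  symm := by
    constructor
    intro x y h
    calc (∑ i, |y i - x i|) = ∑ i, |x i - y i| :=
          Finset.sum_congr rfl fun i _ => abs_sub_comm _ _
      _ = 1 := h
  loopless := by constructor; intro x h; simp at h

instance (d : ℕ) : DecidableRel (lattice d).Adj :=
  fun x y => inferInstanceAs (Decidable (∑ i, |x i - y i| = 1))

/-- The ℓ¹ distance on `ℤ^d`, i.e. the graph distance of the lattice. -/
def dist1 {d : ℕ} (x y : Fin d → ℤ) : ℕ := (∑ i, |x i - y i|).toNat

/-- The random walk loop soup with weight function `U` admits exponential decay of the
connection probabilities at `(β, N)`. -/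
def ExpDecay (d : ℕ) (U : ℕ → ℝ) (N β : ℝ) : Prop :=
  ∃ c : ℝ, 0 < c ∧ ∀ (K : Finset (Fin d → ℤ)) (x y : Fin d → ℤ) (hx : x ∈ K) (hy : y ∈ K),
    prob ((lattice d).induce (↑K : Set (Fin d → ℤ))) U N β
        (connEvent ⟨x, by simpa using hx⟩ ⟨y, by simpa using hy⟩)
      ≤ Real.exp (-c * (dist1 x y : ℝ))

/-- The critical inverse temperature of the random walk loop soup on `ℤ^d`. -/
noncomputable def betaCrit (d : ℕ) (U : ℕ → ℝ) (N : ℝ) : ℝ≥0∞ :=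
  ⨆ (β : ℝ≥0) (_ : ExpDecay d U N (β : ℝ)), (β : ℝ≥0∞)

end RWLS
namespace RWLS

/-- The unit step of `ℤ^d` indexed by a coordinate and a sign: the `2d` nearest
neighbours of the origin. -/
def stepVec {d : ℕ} (p : Fin d × Bool) : Fin d → ℤ :=
  fun i => if i = p.1 then (if p.2 then 1 else -1) else 0

/-- Position after `j` steps of the simple random walk (started at the origin)
encoded by the step sequence `s`. -/
def walkPos {d k : ℕ} (s : Fin k → Fin d × Bool) (j : ℕ) : Fin d → ℤ :=
  ∑ i ∈ Finset.univ.filter (fun i : Fin k => (i : ℕ) < j), stepVec (s i)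

/-- The number of visits `n_x^{(k)}(X)` of the walk at `x` during times `1,…,k`. -/
def nVisits {d k : ℕ} (s : Fin k → Fin d × Bool) (x : Fin d → ℤ) : ℕ :=
  ((Finset.Icc 1 k).filter fun j => walkPos s j = x).card

/-- `χ_U(k) = E_o[∏_x U(n_x^{(k)}(X))]` for the simple random walk on `ℤ^d`: the average,
over the `(2d)^k` step sequences, of the product of `U` of the visit numbers (the product is
restricted to the visited sites, which is the full product whenever `U 0 = 1`). -/
noncomputable def chi (d : ℕ) (U : ℕ → ℝ) (k : ℕ) : ℝ :=
  ((2 * d : ℝ) ^ k)⁻¹ *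
    ∑ s : Fin k → Fin d × Bool, ∏ x ∈ (Finset.Icc 1 k).image (walkPos s), U (nVisits s x)

/-- The lower bound `β̃_c(U)` for the critical inverse temperature, defined through the
exponential rate of `χ_U`. -/
noncomputable def betaTilde (d : ℕ) (U : ℕ → ℝ) : ℝ≥0∞ :=
  ⨆ (β : ℝ≥0) (_ : 0 < β ∧
      Filter.limsup (fun k : ℕ => ((Real.log (chi d U k) / k : ℝ) : EReal)) Filter.atTop
        < ((-Real.log (2 * d * (β : ℝ)) : ℝ) : EReal)), (β : ℝ≥0∞)

end RWLS
namespace RWLS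
variable {V : Type*}

variable {G : SimpleGraph V} (γ : Loop G)

lemma Loop.two_le_val_length : 2 ≤ γ.val.length := γ.prop.1
lemma Loop.core_length : γ.core.length = γ.len := by simp [Loop.core, Loop.len]
lemma Loop.len_pos : 1 ≤ γ.len := by
  have := γ.two_le_val_length; simp only [Loop.len]; omega
lemma Loop.core_length_pos : 0 < γ.core.length := by
  have := γ.len_pos; rw [γ.core_length]; omega
lemma Loop.core_lt_val (m : ℕ) (h : m < γ.core.length) : m < γ.val.length := by
  simp only [Loop.core, List.length_dropLast] at h; omega

lemma Loop.vert_eq_val (m : ℕ) :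
    γ.vert m = γ.val[m % γ.core.length]'(γ.core_lt_val _ (Nat.mod_lt _ γ.core_length_pos)) := by
  show γ.core.get _ = _
  rw [List.get_eq_getElem]
  simp [Loop.core]

lemma Loop.vert_eq_getElem (m : ℕ) (h : m < γ.core.length) :
    γ.vert m = γ.val[m]'(γ.core_lt_val _ h) := by
  rw [γ.vert_eq_val]
  congr 1
  exact Nat.mod_eq_of_lt h

lemma Loop.vert_eq_get (m : ℕ) (h : m < γ.core.length) :
    γ.vert m = γ.core.get ⟨m, h⟩ := by
  show γ.core.get _ = _
  congr 1
  exact Fin.ext (Nat.mod_eq_of_lt h)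

lemma Loop.vert_mod (m : ℕ) : γ.vert (m % γ.len) = γ.vert m := by
  rw [γ.vert_eq_val, γ.vert_eq_val]
  congr 1
  rw [γ.core_length, Nat.mod_mod_of_dvd _ dvd_rfl]

lemma Loop.vert_add_len (m : ℕ) : γ.vert (m + γ.len) = γ.vert m := by
  rw [← γ.vert_mod (m + γ.len), ← γ.vert_mod m]
  congr 1
  simp [Nat.add_mod]

lemma Loop.val_last_eq_head :
    γ.val[γ.val.length - 1]'(by have := γ.two_le_val_length; omega) =
      γ.val[0]'(by have := γ.two_le_val_length; omega) := by
  have h := γ.prop.2.2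
  rw [List.getLast?_eq_getElem?, List.head?_eq_getElem?] at h
  rw [List.getElem?_eq_getElem (by have := γ.two_le_val_length; omega),
    List.getElem?_eq_getElem (by have := γ.two_le_val_length; omega)] at h
  exact Option.some_injective _ h

lemma Loop.adj_vert (m : ℕ) : G.Adj (γ.vert m) (γ.vert (m + 1)) := by
  have h2 := γ.two_le_val_length
  have hch : ∀ i (h : i < γ.val.length - 1),
      G.Adj (γ.val[i]'(by omega)) (γ.val[i+1]'(by omega)) := by
    have := γ.prop.2.1
    replace this := List.isChain_iff_getElem.mp this
    intro i h
    simpa using this i (by omega)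
  set k := γ.core.length with hk
  have hkv : γ.val.length = k + 1 := by simp only [hk, Loop.core, List.length_dropLast]; omega
  have hkpos : 0 < k := γ.core_length_pos
  have hm : m % k < k := Nat.mod_lt _ hkpos
  rw [γ.vert_eq_val m, γ.vert_eq_val (m+1)]
  simp only [← hk]
  rcases Nat.lt_or_ge (m % k + 1) k with hlt | hge
  · have he : (m + 1) % k = m % k + 1 := by
      have h1 : (m + 1) % k = (m % k + 1 % k) % k := by rw [Nat.add_mod]
      rcases Nat.eq_or_lt_of_le hkpos with hk1 | hk1
      · omega
      · rw [h1, Nat.mod_eq_of_lt (by omega : (1:ℕ) < k), Nat.mod_eq_of_lt (by omega)]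
    simp only [he]
    exact hch (m % k) (by omega)
  · have hmk : m % k = k - 1 := by omega
    have he : (m + 1) % k = 0 := by
      rw [Nat.add_mod, hmk]
      have : 1 % k ≤ 1 := Nat.mod_le 1 k
      rcases Nat.eq_or_lt_of_le hkpos with h1 | h1
      · simp [← h1]
      · rw [Nat.mod_eq_of_lt (by omega : 1 < k)]
        simp [Nat.sub_add_cancel (by omega : 1 ≤ k)]
    simp only [he, hmk]
    have hh := γ.val_last_eq_head
    simp only [hkv, Nat.add_sub_cancel] at hh
    have h3 := hch (k-1) (by omega)
    simp only [show k - 1 + 1 = k by omega] at h3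
    rwa [hh] at h3

end RWLS

-- appended to c1
namespace RWLS
variable {V : Type*} {G : SimpleGraph V} (γ : Loop G)

lemma Loop.mem_core_of_mem_val {x : V} (h : x ∈ γ.val) : x ∈ γ.core := by
  rw [List.mem_iff_getElem] at h
  obtain ⟨m, hm, hx⟩ := h
  have hkv : γ.val.length = γ.core.length + 1 := by
    have := γ.two_le_val_length
    simp only [Loop.core, List.length_dropLast]; omega
  rcases Nat.lt_or_ge m γ.core.length with h1 | h1
  · rw [List.mem_iff_getElem]
    exact ⟨m, h1, by rw [← hx]; simp [Loop.core]⟩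
  · have hm' : m = γ.val.length - 1 := by omega
    subst hm'
    have := γ.val_last_eq_head
    rw [this] at hx
    rw [List.mem_iff_getElem]
    refine ⟨0, γ.core_length_pos, ?_⟩
    rw [← hx]; simp [Loop.core]

lemma Loop.val_ext {γ' : Loop G} (h : γ.core = γ'.core) : γ = γ' := by
  have hkv : γ.val.length = γ.core.length + 1 := by
    have := γ.two_le_val_length; simp only [Loop.core, List.length_dropLast]; omega
  have hkv' : γ'.val.length = γ'.core.length + 1 := by
    have := γ'.two_le_val_length; simp only [Loop.core, List.length_dropLast]; omega
  have hlen : γ.val.length = γ'.val.length := by rw [hkv, hkv', h]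
  apply Subtype.ext
  apply List.ext_getElem hlen
  intro m hm hm'
  rcases Nat.lt_or_ge m γ.core.length with h1 | h1
  · have h2 : m < γ'.core.length := by rw [← h]; exact h1
    have e1 : γ.val[m] = γ.core[m]'h1 := by simp [Loop.core]
    have e2 : γ'.val[m] = γ'.core[m]'h2 := by simp [Loop.core]
    rw [e1, e2]
    exact List.getElem_of_eq h h1 ▸ rfl
  · have hm0 : m = γ.val.length - 1 := by omega
    subst hm0
    have q1 := γ.val_last_eq_head
    have q2 := γ'.val_last_eq_head
    rw [q1]
    simp only [← hlen] at q2
    rw [q2]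
    have e1 : γ.val[0]'(by omega) = γ.core[0]'(γ.core_length_pos) := by simp [Loop.core]
    have e2 : γ'.val[0]'(by omega) = γ'.core[0]'(γ'.core_length_pos) := by simp [Loop.core]
    rw [e1, e2]
    exact List.getElem_of_eq h _ ▸ rfl

lemma count_eq_sum_ite {α : Type*} [DecidableEq α] (c : List α) (x : α) :
    c.count x = ∑ i ∈ Finset.range c.length, if c.getD i x = x then 1 else 0 := by
  induction c with
  | nil => simp
  | cons a t ih =>
    rw [List.count_cons]
    simp only [List.length_cons, Finset.sum_range_succ']
    simp only [List.getD_cons_succ, List.getD_cons_zero]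
    rw [← ih]
    congr 1
    simp [beq_iff_eq]

lemma Loop.nx_eq_card [DecidableEq V] (x : V) :
    γ.nx x = ((Finset.range γ.len).filter fun m => γ.vert m = x).card := by
  rw [Loop.nx, count_eq_sum_ite, Finset.card_filter, γ.core_length]
  apply Finset.sum_congr rfl
  intro i hi
  rw [Finset.mem_range] at hi
  have h1 : i < γ.core.length := by rw [γ.core_length]; exact hi
  rw [List.getD_eq_getElem _ _ h1, γ.vert_eq_getElem _ h1]
  simp [Loop.core]

end RWLS

namespace RWLS

variable {d k : ℕ}

lemma walkPos_zero (s : Fin k → Fin d × Bool) : walkPos s 0 = 0 := by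
  unfold walkPos
  rw [Finset.filter_false_of_mem (fun i _ => by omega)]
  simp

lemma walkPos_succ (s : Fin k → Fin d × Bool) (j : ℕ) (hj : j < k) :
    walkPos s (j + 1) = walkPos s j + stepVec (s ⟨j, hj⟩) := by
  unfold walkPos
  have : Finset.univ.filter (fun i : Fin k => (i : ℕ) < j + 1) =
      insert ⟨j, hj⟩ (Finset.univ.filter (fun i : Fin k => (i : ℕ) < j)) := by
    ext i
    simp only [Finset.mem_insert, Finset.mem_filter, Finset.mem_univ, true_and]
    constructor
    · intro h
      rcases Nat.lt_or_ge (i : ℕ) j with h1 | h1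
      · exact Or.inr h1
      · exact Or.inl (Fin.ext (show (i:ℕ) = j by omega))
    · rintro (h | h)
      · subst h; exact Nat.lt_succ_self j
      · omega
  rw [this, Finset.sum_insert (by simp)]
  ring

lemma step_exists {x y : Fin d → ℤ} (h : (lattice d).Adj x y) :
    ∃ p : Fin d × Bool, y = x + stepVec p := by
  have hsum : ∑ i, |x i - y i| = 1 := h
  have hne : x ≠ y := (lattice d).ne_of_adj h
  have : ∃ i, x i ≠ y i := by
    by_contra hc
    push_neg at hc
    exact hne (funext hc)
  obtain ⟨i₀, hi₀⟩ := this
  have h1 : (1 : ℤ) ≤ |x i₀ - y i₀| :=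
    Int.one_le_abs (sub_ne_zero.mpr hi₀)
  have hle : |x i₀ - y i₀| ≤ ∑ i, |x i - y i| :=
    Finset.single_le_sum (f := fun i => |x i - y i|) (fun i _ => abs_nonneg _) (Finset.mem_univ i₀)
  have heq : |x i₀ - y i₀| = 1 := le_antisymm (hsum ▸ hle) h1
  have hrest : ∀ j, j ≠ i₀ → x j = y j := by
    intro j hj
    have hsplit : ∑ i ∈ Finset.univ.erase i₀, |x i - y i| = 0 := by
      have htot := Finset.add_sum_erase Finset.univ (fun i => |x i - y i|) (Finset.mem_univ i₀)
      beta_reduce at htot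
      rw [hsum] at htot
      rw [heq] at htot
      linarith
    have := (Finset.sum_eq_zero_iff_of_nonneg (fun i _ => abs_nonneg (x i - y i))).mp hsplit j
      (Finset.mem_erase.mpr ⟨hj, Finset.mem_univ j⟩)
    have : x j - y j = 0 := abs_eq_zero.mp this
    omega
  refine ⟨(i₀, decide (y i₀ = x i₀ + 1)), funext fun j => ?_⟩
  by_cases hj : j = i₀
  · subst hj
    rcases abs_eq (by norm_num : (0:ℤ) ≤ 1) |>.mp heq with h2 | h2
    · have hdec : decide (y j = x j + 1) = false := decide_eq_false (by omega)
      simp [stepVec, hdec]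
      omega
    · have hdec : decide (y j = x j + 1) = true := decide_eq_true (by omega)
      simp [stepVec, hdec]
      omega
  · have := hrest j hj
    simp [stepVec, hj, this]

lemma stepVec_l1 (p : Fin d × Bool) : ∑ i, |stepVec p i| = 1 := by
  unfold stepVec
  rw [Finset.sum_eq_single p.1]
  · cases p.2 <;> simp
  · intro j _ hj; simp [hj]
  · simp

lemma walkPos_l1 (s : Fin k → Fin d × Bool) (j : ℕ) (hj : j ≤ k) :
    ∑ t, |walkPos s j t| ≤ j := by
  induction j with
  | zero => simp [walkPos_zero]
  | succ n ih =>
    have hn : n < k := by omega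
    rw [walkPos_succ s n hn]
    calc ∑ t, |(walkPos s n + stepVec (s ⟨n, hn⟩)) t|
        ≤ ∑ t, (|walkPos s n t| + |stepVec (s ⟨n, hn⟩) t|) := by
          apply Finset.sum_le_sum
          intro t _
          exact abs_add_le _ _
      _ = (∑ t, |walkPos s n t|) + ∑ t, |stepVec (s ⟨n, hn⟩) t| := Finset.sum_add_distrib
      _ ≤ n + 1 := by
          have := ih (by omega)
          have := stepVec_l1 (s ⟨n, hn⟩)
          omega

end RWLS

namespace RWLS

abbrev latticeOn (d : ℕ) (K : Finset (Fin d → ℤ)) : SimpleGraph ↑(↑K : Set (Fin d → ℤ)) :=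
  (lattice d).induce (↑K : Set (Fin d → ℤ))

lemma walkPos_congr {d k k' : ℕ} (h : k = k') (s : Fin k → Fin d × Bool)
    (s' : Fin k' → Fin d × Bool) (hs : ∀ i, s i = s' (Fin.cast h i)) (j : ℕ) :
    walkPos s j = walkPos s' j := by
  subst h
  have : s = s' := funext fun i => hs i
  rw [this]

section Encoding

variable {d : ℕ} {K : Finset (Fin d → ℤ)}

local notation "GK" => latticeOn d K

lemma exists_encoding (γ : Loop GK) (ov : ↑(↑K : Set (Fin d → ℤ))) (hoγ : ov ∈ γ.val) :
    ∃ (j : Fin γ.len) (s : Fin γ.len → Fin d × Bool),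
      ∀ i ≤ γ.len, ((γ.vert (j.val + i) : ↑(↑K : Set (Fin d → ℤ))) : Fin d → ℤ)
        = ↑ov + walkPos s i := by
  have hoc : ov ∈ γ.core := γ.mem_core_of_mem_val hoγ
  rw [List.mem_iff_get] at hoc
  obtain ⟨n, hn⟩ := hoc
  have hadj : ∀ i : ℕ, (lattice d).Adj ↑(γ.vert (n.val + i)) ↑(γ.vert (n.val + i + 1)) := by
    intro i
    exact γ.adj_vert (n.val + i)
  suffices h : ∀ i ≤ γ.len, ((γ.vert (n.val + i) : ↑(↑K : Set (Fin d → ℤ))) : Fin d → ℤ)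
      = ↑ov + walkPos (fun i : Fin γ.len => Classical.choose (step_exists (hadj i.val))) i by
    exact ⟨⟨n.val, by rw [← γ.core_length]; exact n.isLt⟩,
      fun i => Classical.choose (step_exists (hadj i.val)), h⟩
  intro i hi
  induction i with
  | zero =>
    simp only [Nat.add_zero, walkPos_zero, add_zero]
    have : γ.vert n.val = ov := by
      rw [γ.vert_eq_get n.val n.isLt]
      rw [← hn]
    rw [this]
  | succ i ih =>
    have hik : i < γ.len := by omega
    have hspec := Classical.choose_spec (step_exists (hadj ((⟨i, hik⟩ : Fin γ.len)).val))
    calc ((γ.vert (n.val + (i+1)) : ↑(↑K : Set (Fin d → ℤ))) : Fin d → ℤ)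
        = ↑(γ.vert (n.val + i)) + stepVec (Classical.choose (step_exists (hadj (⟨i, hik⟩ : Fin γ.len).val))) := hspec
      _ = ↑ov + walkPos (fun i : Fin γ.len => Classical.choose (step_exists (hadj i.val))) i
            + stepVec (Classical.choose (step_exists (hadj (⟨i, hik⟩ : Fin γ.len).val))) :=
          congrArg (fun z => z + stepVec (Classical.choose (step_exists (hadj (⟨i, hik⟩ : Fin γ.len).val)))) (ih (by omega))
      _ = ↑ov + walkPos (fun i : Fin γ.len => Classical.choose (step_exists (hadj i.val))) (i+1) := by
          rw [walkPos_succ _ i hik]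
          ring

lemma walkPos_len_eq_zero (γ : Loop GK) (ov : ↑(↑K : Set (Fin d → ℤ)))
    (j : Fin γ.len) (s : Fin γ.len → Fin d × Bool)
    (hclaim : ∀ i ≤ γ.len, ((γ.vert (j.val + i) : ↑(↑K : Set (Fin d → ℤ))) : Fin d → ℤ)
      = ↑ov + walkPos s i) :
    walkPos s γ.len = 0 := by
  have h1 := hclaim γ.len le_rfl
  have h2 := hclaim 0 (by have := γ.len_pos; omega)
  rw [γ.vert_add_len j.val] at h1
  simp only [Nat.add_zero, walkPos_zero, add_zero] at h2
  rw [h2] at h1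
  exact (add_eq_left.mp h1.symm)

lemma dist1_le_len (γ : Loop GK) (ov yv : ↑(↑K : Set (Fin d → ℤ)))
    (hyγ : yv ∈ γ.val)
    (j : Fin γ.len) (s : Fin γ.len → Fin d × Bool)
    (hclaim : ∀ i ≤ γ.len, ((γ.vert (j.val + i) : ↑(↑K : Set (Fin d → ℤ))) : Fin d → ℤ)
      = ↑ov + walkPos s i) :
    dist1 ov.val yv.val ≤ γ.len := by
  have hyc : yv ∈ γ.core := γ.mem_core_of_mem_val hyγ
  rw [List.mem_iff_get] at hyc
  obtain ⟨m, hm⟩ := hyc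
  have hkpos : 1 ≤ γ.len := γ.len_pos
  have hjk : j.val < γ.len := j.isLt
  have hmk : m.val < γ.len := lt_of_lt_of_le m.isLt (le_of_eq γ.core_length)
  obtain ⟨i, hik, hji⟩ : ∃ i, i < γ.len ∧ (j.val + i) % γ.len = m.val := by
    refine ⟨(m.val + γ.len - j.val) % γ.len, Nat.mod_lt _ (by omega), ?_⟩
    rw [Nat.add_mod_mod]
    have h5 : j.val + (m.val + γ.len - j.val) = m.val + γ.len := by omega
    rw [h5, Nat.add_mod_right, Nat.mod_eq_of_lt hmk]
  have hvm : γ.vert (j.val + i) = yv := by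
    rw [← γ.vert_mod (j.val + i), hji]
    rw [γ.vert_eq_get m.val (lt_of_lt_of_le hmk (le_of_eq γ.core_length.symm))]
    exact hm
  have hpos := hclaim i (le_of_lt hik)
  rw [hvm] at hpos
  have hl1 : ∑ t, |walkPos s i t| ≤ (i : ℤ) := walkPos_l1 s i (le_of_lt hik)
  have hd : dist1 ov.val yv.val ≤ i := by
    unfold dist1
    have he : ∀ t, |ov.val t - yv.val t| = |walkPos s i t| := by
      intro t
      have h3 := congrFun hpos t
      simp only [Pi.add_apply] at h3
      rw [h3, abs_sub_comm]
      simp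
    rw [Finset.sum_congr rfl (fun t _ => he t)]
    omega
  omega

lemma encoding_injective (γ γ' : Loop GK) (ov : ↑(↑K : Set (Fin d → ℤ)))
    (hlen : γ.len = γ'.len)
    (j : Fin γ.len) (s : Fin γ.len → Fin d × Bool)
    (j' : Fin γ'.len) (s' : Fin γ'.len → Fin d × Bool)
    (hj : j.val = j'.val) (hs : ∀ i, s i = s' (Fin.cast hlen i))
    (hclaim : ∀ i ≤ γ.len, ((γ.vert (j.val + i) : ↑(↑K : Set (Fin d → ℤ))) : Fin d → ℤ)
      = ↑ov + walkPos s i)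
    (hclaim' : ∀ i ≤ γ'.len, ((γ'.vert (j'.val + i) : ↑(↑K : Set (Fin d → ℤ))) : Fin d → ℤ)
      = ↑ov + walkPos s' i) :
    γ = γ' := by
  apply Loop.val_ext
  have hkpos : 1 ≤ γ.len := γ.len_pos
  have hwalk : ∀ i : ℕ, walkPos s i = walkPos s' i :=
    walkPos_congr hlen s s' hs
  have hvert : ∀ m : ℕ, m < γ.len → γ.vert m = ⟨(γ'.vert m : Fin d → ℤ), (γ'.vert m).2⟩ := by
    intro m hmk
    have hjk : j.val < γ.len := j.isLt
    obtain ⟨i, hik, hji⟩ : ∃ i, i < γ.len ∧ (j.val + i) % γ.len = m := by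
      refine ⟨(m + γ.len - j.val) % γ.len, Nat.mod_lt _ (by omega), ?_⟩
      rw [Nat.add_mod_mod]
      have h5 : j.val + (m + γ.len - j.val) = m + γ.len := by omega
      rw [h5, Nat.add_mod_right, Nat.mod_eq_of_lt hmk]
    have e1 : γ.vert m = γ.vert (j.val + i) := by
      rw [← γ.vert_mod (j.val + i), hji]
    have e2 : γ'.vert m = γ'.vert (j'.val + i) := by
      have hji' : (j'.val + i) % γ'.len = m := by rw [← hj, ← hlen]; exact hji
      rw [← γ'.vert_mod (j'.val + i), hji']
    have c1 := hclaim i (le_of_lt hik)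
    have c2 := hclaim' i (by omega)
    rw [e1, e2]
    apply Subtype.ext
    rw [c1, c2, hwalk]
  apply List.ext_getElem
  · rw [γ.core_length, γ'.core_length, hlen]
  · intro m hm hm'
    have hmk : m < γ.len := by rwa [γ.core_length] at hm
    have h1 : γ.core[m] = γ.vert m := by
      rw [γ.vert_eq_get m hm, List.get_eq_getElem]
    have h2 : γ'.core[m] = γ'.vert m := by
      rw [γ'.vert_eq_get m hm', List.get_eq_getElem]
    rw [h1, h2, hvert m hmk]

end Encoding
end RWLS

namespace RWLS

lemma mod_rot₁ {k a b : ℕ} (ha : a < k) (hb : b < k) : (a + (b + k - a) % k) % k = b := by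
  rw [Nat.add_mod_mod]
  have h : a + (b + k - a) = b + k := by omega
  rw [h, Nat.add_mod_right, Nat.mod_eq_of_lt hb]

lemma mod_rot₂ {k a i : ℕ} (ha : a < k) (hi : i < k) : ((a + i) % k + k - a) % k = i := by
  have h1 : (a + i) % k + k - a = (a + i) % k + (k - a) := by omega
  rw [h1, Nat.mod_add_mod]
  have h2 : a + i + (k - a) = i + k := by omega
  rw [h2, Nat.add_mod_right, Nat.mod_eq_of_lt hi]

section Encoding2

variable {d : ℕ} {K : Finset (Fin d → ℤ)}

local notation "GK" => latticeOn d K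

lemma nx_eq_nVisits [DecidableEq ↑(↑K : Set (Fin d → ℤ))]
    (γ : Loop GK) (ov : ↑(↑K : Set (Fin d → ℤ)))
    (j : Fin γ.len) (s : Fin γ.len → Fin d × Bool)
    (hclaim : ∀ i ≤ γ.len, ((γ.vert (j.val + i) : ↑(↑K : Set (Fin d → ℤ))) : Fin d → ℤ)
      = ↑ov + walkPos s i)
    (x : ↑(↑K : Set (Fin d → ℤ))) :
    γ.nx x = nVisits s (x.val - ov.val) := by
  classical
  have hkpos : 1 ≤ γ.len := γ.len_pos
  have hjk : j.val < γ.len := j.isLt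
  rw [γ.nx_eq_card x]
  -- rotation
  have step1 : ((Finset.range γ.len).filter fun m => γ.vert m = x).card
      = ((Finset.range γ.len).filter fun i => γ.vert (j.val + i) = x).card := by
    apply Finset.card_bij' (fun m _ => (m + γ.len - j.val) % γ.len)
      (fun i _ => (j.val + i) % γ.len)
    · intro m hm
      rw [Finset.mem_filter, Finset.mem_range] at hm ⊢
      refine ⟨Nat.mod_lt _ (by omega), ?_⟩
      rw [← γ.vert_mod (j.val + (m + γ.len - j.val) % γ.len), Nat.add_mod_mod]
      have h : j.val + (m + γ.len - j.val) = m + γ.len := by omega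
      rw [h, Nat.add_mod_right, Nat.mod_eq_of_lt hm.1]
      exact hm.2
    · intro i hi
      rw [Finset.mem_filter, Finset.mem_range] at hi ⊢
      refine ⟨Nat.mod_lt _ (by omega), ?_⟩
      rw [γ.vert_mod]
      exact hi.2
    · intro m hm
      rw [Finset.mem_filter, Finset.mem_range] at hm
      exact mod_rot₁ hjk hm.1
    · intro i hi
      rw [Finset.mem_filter, Finset.mem_range] at hi
      exact mod_rot₂ hjk hi.1
  rw [step1]
  -- translate condition via claim
  have step2 : ((Finset.range γ.len).filter fun i => γ.vert (j.val + i) = x).card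
      = ((Finset.range γ.len).filter fun i => walkPos s i = x.val - ov.val).card := by
    congr 1
    apply Finset.filter_congr
    intro i hi
    rw [Finset.mem_range] at hi
    constructor
    · intro h
      have := hclaim i (le_of_lt hi)
      rw [h] at this
      simp only [this]
      ring
    · intro h
      have hc := hclaim i (le_of_lt hi)
      apply Subtype.ext
      rw [hc, h]
      ring
  rw [step2]
  -- shift range to Icc
  have h0k : walkPos s 0 = walkPos s γ.len := by
    rw [walkPos_zero, walkPos_len_eq_zero γ ov j s hclaim]
  unfold nVisits
  set z := x.val - ov.val with hz
  have hIcc : Finset.Icc 1 γ.len = (Finset.range (γ.len + 1)).erase 0 := by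
    ext i
    simp only [Finset.mem_Icc, Finset.mem_erase, Finset.mem_range]
    omega
  have hrange : Finset.range (γ.len + 1) = insert γ.len (Finset.range γ.len) := by
    rw [Finset.range_add_one]
  by_cases h0 : walkPos s 0 = z
  · have hk' : walkPos s γ.len = z := by rw [← h0k]; exact h0
    have c1 : ((Finset.range (γ.len+1)).filter fun i => walkPos s i = z).card
        = ((Finset.range γ.len).filter fun i => walkPos s i = z).card + 1 := by
      rw [hrange, Finset.filter_insert, if_pos hk', Finset.card_insert_of_notMem (by simp)]
    have c2 : ((Finset.Icc 1 γ.len).filter fun i => walkPos s i = z).card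
        = ((Finset.range (γ.len+1)).filter fun i => walkPos s i = z).card - 1 := by
      rw [hIcc, Finset.filter_erase, Finset.card_erase_of_mem]
      rw [Finset.mem_filter, Finset.mem_range]
      exact ⟨by omega, h0⟩
    omega
  · have hk' : ¬ walkPos s γ.len = z := by rw [← h0k]; exact h0
    have c1 : ((Finset.range (γ.len+1)).filter fun i => walkPos s i = z).card
        = ((Finset.range γ.len).filter fun i => walkPos s i = z).card := by
      rw [hrange, Finset.filter_insert, if_neg hk']
    have c2 : ((Finset.Icc 1 γ.len).filter fun i => walkPos s i = z).card
        = ((Finset.range (γ.len+1)).filter fun i => walkPos s i = z).card := by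
      rw [hIcc, Finset.filter_erase, Finset.erase_eq_of_notMem]
      rw [Finset.mem_filter]
      push_neg
      intro _
      exact h0
    omega

lemma prod_nx_eq [DecidableEq ↑(↑K : Set (Fin d → ℤ))] [Fintype ↑(↑K : Set (Fin d → ℤ))]
    (U : ℕ → ℝ) (hU0 : U 0 = 1)
    (γ : Loop GK) (ov : ↑(↑K : Set (Fin d → ℤ)))
    (j : Fin γ.len) (s : Fin γ.len → Fin d × Bool)
    (hclaim : ∀ i ≤ γ.len, ((γ.vert (j.val + i) : ↑(↑K : Set (Fin d → ℤ))) : Fin d → ℤ)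
      = ↑ov + walkPos s i) :
    ∏ x : ↑(↑K : Set (Fin d → ℤ)), U (γ.nx x)
      = ∏ z ∈ (Finset.Icc 1 γ.len).image (walkPos s), U (nVisits s z) := by
  classical
  have h1 : ∀ x : ↑(↑K : Set (Fin d → ℤ)), U (γ.nx x) = U (nVisits s (x.val - ov.val)) := by
    intro x
    rw [nx_eq_nVisits γ ov j s hclaim x]
  rw [Finset.prod_congr rfl (fun x _ => h1 x)]
  have h2 := Finset.prod_set_coe (f := fun z => U (nVisits s (z - ov.val))) (↑K : Set (Fin d → ℤ))
  rw [Finset.toFinset_coe] at h2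
  rw [h2]
  have h3 : ∏ z ∈ K, U (nVisits s (z - ov.val))
      = ∏ w ∈ K.image (· - ov.val), U (nVisits s w) := by
    rw [Finset.prod_image]
    intro a _ b _ hab
    have := congrArg (· + ov.val) hab
    simpa using this
  rw [h3]
  symm
  apply Finset.prod_subset
  · intro w hw
    rw [Finset.mem_image] at hw ⊢
    obtain ⟨i, hi, hwi⟩ := hw
    rw [Finset.mem_Icc] at hi
    have hc := hclaim i hi.2
    refine ⟨(γ.vert (j.val + i) : ↑(↑K : Set (Fin d → ℤ))).val, ?_, ?_⟩
    · have := (γ.vert (j.val + i)).2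
      simpa using this
    · rw [hc, ← hwi]
      ring
  · intro w _ hw
    have hv : nVisits s w = 0 := by
      by_contra hc
      have : ∃ i ∈ Finset.Icc 1 γ.len, walkPos s i = w := by
        have hne : ((Finset.Icc 1 γ.len).filter fun i => walkPos s i = w).Nonempty := by
          rw [← Finset.card_pos]
          unfold nVisits at hc
          omega
        obtain ⟨i, hi⟩ := hne
        rw [Finset.mem_filter] at hi
        exact ⟨i, hi.1, hi.2⟩
      obtain ⟨i, hi1, hi2⟩ := this
      exact hw (Finset.mem_image.mpr ⟨i, hi1, hi2⟩)
    rw [hv, hU0]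

end Encoding2
end RWLS

namespace RWLS


lemma prod_pair_heq {A : Type*} {k k' : ℕ} (h : k = k')
    {p : Fin k × (Fin k → A)} {p' : Fin k' × (Fin k' → A)} (hp : HEq p p') :
    p.1.val = p'.1.val ∧ ∀ i, p.2 i = p'.2 (Fin.cast h i) := by
  subst h
  rw [eq_of_heq hp]
  exact ⟨rfl, fun _ => rfl⟩

section LoopSum

variable {d : ℕ} {K : Finset (Fin d → ℤ)}

local notation "GK" => latticeOn d K

lemma loopSum_le [DecidableEq (↑(↑K : Set (Fin d → ℤ)) : Type _)] [Fintype (↑(↑K : Set (Fin d → ℤ)) : Type _)]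
    (hd : 1 ≤ d) (U : ℕ → ℝ) (hU0 : U 0 = 1) (hUnn : ∀ n, 0 ≤ U n)
    (β : ℝ) (hβ : 0 < β)
    (o y : Fin d → ℤ) (ho' : o ∈ (↑K : Set (Fin d → ℤ))) (hy' : y ∈ (↑K : Set (Fin d → ℤ))) :
    ∑' γ : {γ : Loop GK // (⟨o, ho'⟩ : (↑(↑K : Set (Fin d → ℤ)) : Type _)) ∈ γ.val ∧ (⟨y, hy'⟩ : (↑(↑K : Set (Fin d → ℤ)) : Type _)) ∈ γ.val},
        ENNReal.ofReal (β ^ γ.1.len / (γ.1.len : ℝ) * ∏ x : (↑(↑K : Set (Fin d → ℤ)) : Type _), U (γ.1.nx x))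
      ≤ ∑' k : ℕ, if dist1 o y ≤ k then ENNReal.ofReal ((2 * d * β) ^ k * chi d U k) else 0 := by
  classical
  set ov : (↑(↑K : Set (Fin d → ℤ)) : Type _) := ⟨o, ho'⟩ with hov
  set yv : (↑(↑K : Set (Fin d → ℤ)) : Type _) := ⟨y, hy'⟩ with hyv
  set T := Σ k : ℕ, Fin k × (Fin k → Fin d × Bool) with hT
  set g : T → ℝ≥0∞ := fun t =>
    if dist1 o y ≤ t.1 then
      ENNReal.ofReal (β ^ t.1 / (t.1 : ℝ) *
        ∏ z ∈ (Finset.Icc 1 t.1).image (walkPos t.2.2), U (nVisits t.2.2 z))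
    else 0 with hg
  set Φ : {γ : Loop GK // ov ∈ γ.val ∧ yv ∈ γ.val} → T := fun γ =>
    ⟨γ.1.len, (exists_encoding γ.1 ov γ.2.1).choose,
      (exists_encoding γ.1 ov γ.2.1).choose_spec.choose⟩ with hΦ
  have hΦinj : Function.Injective Φ := by
    intro γ γ' h
    have h1 : γ.1.len = γ'.1.len := congrArg Sigma.fst h
    have h2 := (Sigma.mk.inj_iff.mp h).2
    obtain ⟨hj, hs⟩ := prod_pair_heq h1 h2
    apply Subtype.ext
    exact encoding_injective γ.1 γ'.1 ov h1 _ _ _ _ hj hs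
      (exists_encoding γ.1 ov γ.2.1).choose_spec.choose_spec
      (exists_encoding γ'.1 ov γ'.2.1).choose_spec.choose_spec
  have hpt : ∀ γ : {γ : Loop GK // ov ∈ γ.val ∧ yv ∈ γ.val},
      ENNReal.ofReal (β ^ γ.1.len / (γ.1.len : ℝ) * ∏ x : (↑(↑K : Set (Fin d → ℤ)) : Type _), U (γ.1.nx x)) = g (Φ γ) := by
    intro γ
    have hclaim := (exists_encoding γ.1 ov γ.2.1).choose_spec.choose_spec
    have hdist : dist1 o y ≤ γ.1.len :=
      dist1_le_len γ.1 ov yv γ.2.2 _ _ hclaim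
    rw [hg]
    simp only [hΦ, if_pos hdist]
    congr 1
    rw [prod_nx_eq U hU0 γ.1 ov _ _ hclaim]
  calc ∑' γ : {γ : Loop GK // ov ∈ γ.val ∧ yv ∈ γ.val},
        ENNReal.ofReal (β ^ γ.1.len / (γ.1.len : ℝ) * ∏ x : (↑(↑K : Set (Fin d → ℤ)) : Type _), U (γ.1.nx x))
      = ∑' γ : {γ : Loop GK // ov ∈ γ.val ∧ yv ∈ γ.val}, g (Φ γ) := by
        exact tsum_congr hpt
    _ ≤ ∑' t : T, g t := ENNReal.tsum_comp_le_tsum_of_injective hΦinj g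
    _ = ∑' k : ℕ, ∑' p : Fin k × (Fin k → Fin d × Bool), g ⟨k, p⟩ := ENNReal.tsum_sigma' g
    _ ≤ ∑' k : ℕ, if dist1 o y ≤ k then ENNReal.ofReal ((2 * d * β) ^ k * chi d U k) else 0 := by
        apply ENNReal.tsum_le_tsum
        intro k
        rw [tsum_fintype]
        by_cases hr : dist1 o y ≤ k
        · rw [if_pos hr]
          rcases Nat.eq_zero_or_pos k with hk0 | hkpos
          · subst hk0
            have : ∀ p : Fin 0 × (Fin 0 → Fin d × Bool), g ⟨0, p⟩ = 0 := by
              rintro ⟨j, _⟩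
              exact absurd j.isLt (by omega)
            rw [Finset.sum_congr rfl (fun p _ => this p)]
            simp
          · -- k ≥ 1
            have hsum : ∑ p : Fin k × (Fin k → Fin d × Bool), g ⟨k, p⟩
                = ∑ j : Fin k, ∑ s : Fin k → Fin d × Bool, g ⟨k, (j, s)⟩ := by
              rw [Fintype.sum_prod_type]
            rw [hsum]
            have hgval : ∀ (j : Fin k) (s : Fin k → Fin d × Bool),
                g ⟨k, (j, s)⟩ = ENNReal.ofReal (β ^ k / (k : ℝ) *
                  ∏ z ∈ (Finset.Icc 1 k).image (walkPos s), U (nVisits s z)) := by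
              intro j s
              rw [hg]
              simp only [if_pos hr]
            have hconst : ∀ j : Fin k, ∑ s : Fin k → Fin d × Bool, g ⟨k, (j, s)⟩
                = ∑ s : Fin k → Fin d × Bool, ENNReal.ofReal (β ^ k / (k : ℝ) *
                  ∏ z ∈ (Finset.Icc 1 k).image (walkPos s), U (nVisits s z)) := by
              intro j
              exact Finset.sum_congr rfl (fun s _ => hgval j s)
            rw [Finset.sum_congr rfl (fun j _ => hconst j), Finset.sum_const]
            rw [Finset.card_univ, Fintype.card_fin]
            -- now: k • ∑ s, ofReal (β^k/k * ∏) ≤ ofReal ((2dβ)^k * chi)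
            have hprodnn : ∀ s : Fin k → Fin d × Bool,
                0 ≤ ∏ z ∈ (Finset.Icc 1 k).image (walkPos s), U (nVisits s z) :=
              fun s => Finset.prod_nonneg (fun z _ => hUnn _)
            have hchi : (2 * d * β) ^ k * chi d U k
                = β ^ k * ∑ s : Fin k → Fin d × Bool,
                    ∏ z ∈ (Finset.Icc 1 k).image (walkPos s), U (nVisits s z) := by
              unfold chi
              have h2d : ((2 * d : ℝ)) ^ k ≠ 0 := by
                apply pow_ne_zero
                have : (1:ℝ) ≤ (d:ℝ) := by exact_mod_cast hd
                positivity
              have : (2 * (d:ℝ) * β) ^ k = (2 * d : ℝ)^k * β ^ k := by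
                rw [mul_pow]
              rw [this]
              field_simp
            rw [hchi]
            rw [ENNReal.ofReal_mul (le_of_lt (pow_pos hβ k))]
            rw [ENNReal.ofReal_sum_of_nonneg (fun s _ => hprodnn s)]
            rw [Finset.mul_sum]
            rw [← Finset.sum_nsmul]
            apply Finset.sum_le_sum
            intro s _
            rw [nsmul_eq_mul,
              show ((k:ℝ≥0∞)) = ENNReal.ofReal (k:ℝ) from (ENNReal.ofReal_natCast k).symm,
              ← ENNReal.ofReal_mul (by positivity : (0:ℝ) ≤ (k:ℝ)),
              ← ENNReal.ofReal_mul (le_of_lt (pow_pos hβ k))]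
            apply ENNReal.ofReal_le_ofReal
            have hkne : (k:ℝ) ≠ 0 := by positivity
            apply le_of_eq
            field_simp
        · rw [if_neg hr]
          have : ∀ p : Fin k × (Fin k → Fin d × Bool), g ⟨k, p⟩ = 0 := by
            intro p
            rw [hg]
            simp only [if_neg hr]
          rw [Finset.sum_congr rfl (fun p _ => this p)]
          simp

end LoopSum
end RWLS

namespace RWLS
variable {V : Type*}

lemma insertIdx_getElem_eraseIdx {α : Type*} (l : List α) (n : ℕ) (h : n < l.length) :
    (l.eraseIdx n).insertIdx n (l[n]'h) = l := by
  induction l generalizing n with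
  | nil => simp at h
  | cons a t ih =>
    cases n with
    | zero => simp
    | succ n =>
      simp only [List.eraseIdx_cons_succ, List.getElem_cons_succ, List.insertIdx_succ_cons]
      rw [ih n (by simpa using h)]

section WeightBound

variable [Fintype V] [DecidableEq V] {G : SimpleGraph V}

lemma weight_nonneg (U : ℕ → ℝ) (N β : ℝ) (hN : 0 ≤ N) (hβ : 0 ≤ β)
    (hUnn : ∀ n, 0 ≤ U n) (ω : Config G) : 0 ≤ weight G U N β ω := by
  unfold weight
  apply mul_nonneg
  apply mul_nonneg
  apply mul_nonneg
  · positivity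
  · positivity
  · apply List.prod_nonneg
    intro a ha
    rw [List.mem_map] at ha
    obtain ⟨ℓ, _, rfl⟩ := ha
    positivity
  · exact Finset.prod_nonneg fun x _ => hUnn _

lemma perm_get_eraseIdx (ω : Config G) (n : ℕ) (h : n < ω.length) :
    ω.Perm ((ω.get ⟨n, h⟩) :: ω.eraseIdx n) := by
  have h1 : n ≤ (ω.eraseIdx n).length := by
    rw [List.length_eraseIdx, if_pos h]; omega
  have := List.perm_insertIdx (ω.get ⟨n, h⟩) (ω.eraseIdx n) h1
  rw [List.get_eq_getElem, insertIdx_getElem_eraseIdx ω n h] at this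
  exact this

lemma weight_le (U : ℕ → ℝ) (N β : ℝ) (hN : 0 ≤ N) (hβ : 0 ≤ β)
    (hUnn : ∀ n, 0 ≤ U n) (hUsub : ∀ m n : ℕ, U (m + n) ≤ U m * U n)
    (ω : Config G) (n : ℕ) (h : n < ω.length) :
    weight G U N β ω ≤ (1 / (ω.length : ℝ)) * (N / 2) *
      (β ^ (ω.get ⟨n, h⟩).len / ((ω.get ⟨n, h⟩).len : ℝ) * ∏ x : V, U ((ω.get ⟨n, h⟩).nx x)) *
      weight G U N β (ω.eraseIdx n) := by
  set γ := ω.get ⟨n, h⟩ with hγ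
  set ω' := ω.eraseIdx n with hω'
  have hperm := perm_get_eraseIdx ω n h
  have hlen' : ω'.length = ω.length - 1 := by
    rw [hω', List.length_eraseIdx, if_pos h]
  have hm : ω.length = ω'.length + 1 := by omega
  -- prod of map
  have hP : (ω.map fun ℓ => β ^ ℓ.len / (ℓ.len : ℝ)).prod
      = (β ^ γ.len / (γ.len : ℝ)) * (ω'.map fun ℓ => β ^ ℓ.len / (ℓ.len : ℝ)).prod := by
    rw [(hperm.map fun ℓ => β ^ ℓ.len / (ℓ.len : ℝ)).prod_eq, List.map_cons, List.prod_cons]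
  have hloc : ∀ x : V, locTime ω x = γ.nx x + locTime ω' x := by
    intro x
    unfold locTime
    rw [(hperm.map fun ℓ => ℓ.nx x).sum_eq, List.map_cons, List.sum_cons]
  have hQ : ∏ x : V, U (locTime ω x) ≤ (∏ x : V, U (γ.nx x)) * ∏ x : V, U (locTime ω' x) := by
    rw [← Finset.prod_mul_distrib]
    apply Finset.prod_le_prod
    · intro x _; exact hUnn _
    · intro x _
      rw [hloc x]
      exact hUsub _ _
  have hfact : (1 : ℝ) / (Nat.factorial ω.length : ℝ)
      = (1 / (ω.length : ℝ)) * (1 / (Nat.factorial ω'.length : ℝ)) := by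
    rw [hm, Nat.factorial_succ]
    push_cast
    rw [one_div, one_div, one_div, mul_inv]
  have hpow : (N / 2) ^ ω.length = (N / 2) * (N / 2) ^ ω'.length := by
    rw [hm, pow_succ]
    ring
  have hpre : 0 ≤ (1 / (Nat.factorial ω.length : ℝ)) * (N / 2) ^ ω.length *
      (ω.map fun ℓ => β ^ ℓ.len / (ℓ.len : ℝ)).prod := by
    apply mul_nonneg
    apply mul_nonneg
    · positivity
    · positivity
    · apply List.prod_nonneg
      intro a ha
      rw [List.mem_map] at ha
      obtain ⟨ℓ, _, rfl⟩ := ha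
      positivity
  calc weight G U N β ω
      = (1 / (Nat.factorial ω.length : ℝ)) * (N / 2) ^ ω.length *
        (ω.map fun ℓ => β ^ ℓ.len / (ℓ.len : ℝ)).prod * ∏ x : V, U (locTime ω x) := rfl
    _ ≤ (1 / (Nat.factorial ω.length : ℝ)) * (N / 2) ^ ω.length *
        (ω.map fun ℓ => β ^ ℓ.len / (ℓ.len : ℝ)).prod *
        ((∏ x : V, U (γ.nx x)) * ∏ x : V, U (locTime ω' x)) :=
      mul_le_mul_of_nonneg_left hQ hpre
    _ = (1 / (ω.length : ℝ)) * (N / 2) *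
        (β ^ γ.len / (γ.len : ℝ) * ∏ x : V, U (γ.nx x)) * weight G U N β ω' := by
      rw [hfact, hpow, hP]
      unfold weight
      ring

end WeightBound
end RWLS

namespace RWLS

section ConfigSum

variable {V : Type*} [Fintype V] [DecidableEq V] {G : SimpleGraph V}

lemma tsum_ite_le_nat (L : ℕ) (C : ℝ≥0∞) :
    ∑' n : ℕ, (if n ≤ L then C else 0) = (L + 1) * C := by
  have hval : ∀ n ∈ Finset.range (L+1), (if n ≤ L then C else 0) = C := by
    intro n hn
    rw [Finset.mem_range] at hn
    exact if_pos (by omega)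
  rw [tsum_eq_sum (s := Finset.range (L+1)) (by
    intro n hn
    rw [Finset.mem_range] at hn
    exact if_neg (by omega))]
  rw [Finset.sum_congr rfl hval, Finset.sum_const, Finset.card_range, nsmul_eq_mul]
  push_cast
  ring

lemma configSum_le (U : ℕ → ℝ) (N β : ℝ) (hN : 0 ≤ N) (hβ : 0 ≤ β)
    (hUnn : ∀ n, 0 ≤ U n) (hUsub : ∀ m n : ℕ, U (m + n) ≤ U m * U n)
    (P : Loop G → Prop) [DecidablePred P] :
    ∑' ω : Config G, (∑ n : Fin ω.length,
        (if P (ω.get n) then (1:ℝ≥0∞) else 0) * ENNReal.ofReal (weight G U N β ω))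
      ≤ ENNReal.ofReal (N / 2) *
        (∑' γ : Loop G, (if P γ then (1:ℝ≥0∞) else 0) *
          ENNReal.ofReal (β ^ γ.len / (γ.len : ℝ) * ∏ x : V, U (γ.nx x))) *
        ∑' ω : Config G, ENNReal.ofReal (weight G U N β ω) := by
  classical
  set W : Config G → ℝ≥0∞ := fun ω => ENNReal.ofReal (weight G U N β ω) with hW
  set q : Loop G → ℝ≥0∞ :=
    fun γ => ENNReal.ofReal (β ^ γ.len / (γ.len : ℝ) * ∏ x : V, U (γ.nx x)) with hq
  set ind : Loop G → ℝ≥0∞ := fun γ => if P γ then 1 else 0 with hind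
  set h₂ : Loop G × (Config G × ℕ) → ℝ≥0∞ := fun t =>
    ind t.1 * (if t.2.2 ≤ t.2.1.length then
      ENNReal.ofReal (1 / ((t.2.1.length : ℝ) + 1)) * ENNReal.ofReal (N/2) * q t.1 * W t.2.1
    else 0) with hh₂
  set ι : (Σ ω : Config G, Fin ω.length) → Loop G × (Config G × ℕ) :=
    fun p => (p.1.get p.2, (p.1.eraseIdx p.2.val, p.2.val)) with hι
  have hinj : Function.Injective ι := by
    rintro ⟨ω, n⟩ ⟨ω', n'⟩ hpq
    rw [hι, Prod.ext_iff, Prod.ext_iff] at hpq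
    obtain ⟨h1, h2, h3⟩ := hpq
    simp only at h1 h2 h3
    have hωω' : ω = ω' := by
      rw [← insertIdx_getElem_eraseIdx ω n.val n.isLt,
        ← insertIdx_getElem_eraseIdx ω' n'.val n'.isLt]
      rw [← List.get_eq_getElem, ← List.get_eq_getElem]
      rw [h1, h2, h3]
    subst hωω'
    have hnn : n = n' := Fin.ext h3
    subst hnn
    rfl
  have hpt : ∀ p : Σ ω : Config G, Fin ω.length,
      ind (p.1.get p.2) * W p.1 ≤ h₂ (ι p) := by
    rintro ⟨ω, n⟩
    have hn' : n.val ≤ (ω.eraseIdx n.val).length := by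
      rw [List.length_eraseIdx, if_pos n.isLt]
      have := n.isLt; omega
    rw [hh₂]
    simp only [hι, if_pos hn']
    apply mul_le_mul_right
    have hwle := weight_le U N β hN hβ hUnn hUsub ω n.val n.isLt
    have hcast : ((ω.eraseIdx n.val).length : ℝ) + 1 = (ω.length : ℝ) := by
      have hl : (ω.eraseIdx n.val).length + 1 = ω.length := by
        rw [List.length_eraseIdx, if_pos n.isLt]
        have := n.isLt; omega
      exact_mod_cast congrArg (Nat.cast : ℕ → ℝ) hl
    have hq0 : 0 ≤ β ^ (ω.get ⟨n.val, n.isLt⟩).len / ((ω.get ⟨n.val, n.isLt⟩).len : ℝ) *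
        ∏ x : V, U ((ω.get ⟨n.val, n.isLt⟩).nx x) := by
      apply mul_nonneg
      · positivity
      · exact Finset.prod_nonneg fun x _ => hUnn _
    have h1m : (0:ℝ) ≤ 1 / (ω.length : ℝ) := by positivity
    have hN2 : (0:ℝ) ≤ N/2 := by linarith
    rw [hcast, hW, hq]
    simp only []
    calc ENNReal.ofReal (weight G U N β ω)
        ≤ ENNReal.ofReal ((1 / (ω.length : ℝ)) * (N / 2) *
            (β ^ (ω.get ⟨n.val, n.isLt⟩).len / ((ω.get ⟨n.val, n.isLt⟩).len : ℝ) *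
              ∏ x : V, U ((ω.get ⟨n.val, n.isLt⟩).nx x)) *
            weight G U N β (ω.eraseIdx n.val)) := ENNReal.ofReal_le_ofReal hwle
      _ = ENNReal.ofReal (1 / (ω.length : ℝ)) * ENNReal.ofReal (N/2) *
            ENNReal.ofReal (β ^ (ω.get ⟨n.val, n.isLt⟩).len / ((ω.get ⟨n.val, n.isLt⟩).len : ℝ) *
              ∏ x : V, U ((ω.get ⟨n.val, n.isLt⟩).nx x)) *
            ENNReal.ofReal (weight G U N β (ω.eraseIdx n.val)) := by
          rw [ENNReal.ofReal_mul (mul_nonneg (mul_nonneg h1m hN2) hq0),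
            ENNReal.ofReal_mul (mul_nonneg h1m hN2), ENNReal.ofReal_mul h1m]
      _ ≤ ENNReal.ofReal (1 / (ω.length : ℝ)) * ENNReal.ofReal (N/2) *
            ENNReal.ofReal (β ^ (ω.get n).len / ((ω.get n).len : ℝ) *
              ∏ x : V, U ((ω.get n).nx x)) *
            ENNReal.ofReal (weight G U N β (ω.eraseIdx n.val)) := le_rfl
  -- assemble
  have hLHS : ∑' ω : Config G, (∑ n : Fin ω.length, ind (ω.get n) * W ω)
      = ∑' p : Σ ω : Config G, Fin ω.length, ind (p.1.get p.2) * W p.1 := by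
    calc ∑' ω : Config G, (∑ n : Fin ω.length, ind (ω.get n) * W ω)
        = ∑' ω : Config G, ∑' n : Fin ω.length, ind (ω.get n) * W ω :=
          tsum_congr fun ω => (tsum_fintype _).symm
      _ = ∑' p : Σ ω : Config G, Fin ω.length, ind (p.1.get p.2) * W p.1 :=
          (ENNReal.tsum_sigma' (f := fun p : Σ ω : Config G, Fin ω.length =>
            ind (p.1.get p.2) * W p.1)).symm
  have hmain : ∑' p : Σ ω : Config G, Fin ω.length, ind (p.1.get p.2) * W p.1
      ≤ ∑' t : Loop G × (Config G × ℕ), h₂ t :=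
    le_trans (ENNReal.tsum_le_tsum hpt) (ENNReal.tsum_comp_le_tsum_of_injective hinj h₂)
  have hRHS : ∑' t : Loop G × (Config G × ℕ), h₂ t
      = ENNReal.ofReal (N / 2) * (∑' γ : Loop G, ind γ * q γ) * ∑' ω : Config G, W ω := by
    rw [ENNReal.tsum_prod' (f := h₂)]
    have hinner : ∀ γ : Loop G, ∑' t2 : Config G × ℕ, h₂ (γ, t2)
        = ind γ * (ENNReal.ofReal (N/2) * q γ * ∑' ω : Config G, W ω) := by
      intro γ
      rw [ENNReal.tsum_prod' (f := fun t2 => h₂ (γ, t2))]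
      have hinner2 : ∀ ω' : Config G, ∑' n : ℕ, h₂ (γ, (ω', n))
          = ind γ * (ENNReal.ofReal (N/2) * q γ * W ω') := by
        intro ω'
        rw [hh₂]
        simp only []
        rw [ENNReal.tsum_mul_left]
        congr 1
        rw [tsum_ite_le_nat ω'.length
          (ENNReal.ofReal (1 / ((ω'.length : ℝ) + 1)) * ENNReal.ofReal (N/2) * q γ * W ω')]
        have hone : ((ω'.length : ℝ≥0∞) + 1) * ENNReal.ofReal (1 / ((ω'.length : ℝ) + 1)) = 1 := by
          have hcast : ((ω'.length : ℝ≥0∞) + 1) = ENNReal.ofReal ((ω'.length : ℝ) + 1) := by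
            rw [ENNReal.ofReal_add (by positivity) (by norm_num)]
            rw [ENNReal.ofReal_natCast, ENNReal.ofReal_one]
          rw [hcast, ← ENNReal.ofReal_mul (by positivity)]
          rw [mul_one_div_cancel (by positivity : ((ω'.length : ℝ) + 1) ≠ 0)]
          exact ENNReal.ofReal_one
        calc ((ω'.length : ℝ≥0∞) + 1) *
              (ENNReal.ofReal (1 / ((ω'.length : ℝ) + 1)) * ENNReal.ofReal (N/2) * q γ * W ω')
            = (((ω'.length : ℝ≥0∞) + 1) * ENNReal.ofReal (1 / ((ω'.length : ℝ) + 1))) *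
              (ENNReal.ofReal (N/2) * q γ * W ω') := by ring
          _ = ENNReal.ofReal (N/2) * q γ * W ω' := by rw [hone, one_mul]
      rw [tsum_congr hinner2]
      rw [ENNReal.tsum_mul_left, ENNReal.tsum_mul_left]
    rw [tsum_congr hinner]
    have : ∀ γ : Loop G, ind γ * (ENNReal.ofReal (N/2) * q γ * ∑' ω : Config G, W ω)
        = (ENNReal.ofReal (N/2) * ∑' ω : Config G, W ω) * (ind γ * q γ) := fun γ => by ring
    rw [tsum_congr this, ENNReal.tsum_mul_left]
    ring
  calc ∑' ω : Config G, (∑ n : Fin ω.length, ind (ω.get n) * W ω)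
      ≤ ∑' t : Loop G × (Config G × ℕ), h₂ t := hLHS ▸ hmain
    _ = _ := hRHS

end ConfigSum
end RWLS

open RWLS in
theorem statement2 (d : ℕ) (hd : 1 ≤ d) (N β : ℝ) (hN : 0 < N) (hβ : 0 < β)
    (U : ℕ → ℝ) (hU : Nice U) (K : Finset (Fin d → ℤ)) (o y : Fin d → ℤ)
    (ho : o ∈ K) (hy : y ∈ K) :
    ENNReal.ofReal
        (prob ((lattice d).induce (↑K : Set (Fin d → ℤ))) U N β
          (connEvent ⟨o, by simpa using ho⟩ ⟨y, by simpa using hy⟩))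
      ≤ ENNReal.ofReal (N / 2) *
        ∑' k : ℕ, if dist1 o y ≤ k then ENNReal.ofReal ((2 * d * β) ^ k * chi d U k) else 0 := by
  classical
  obtain ⟨hUnn, _hGood, hU0, _hUle, hUsub⟩ := hU
  set G := (lattice d).induce (↑K : Set (Fin d → ℤ)) with hG
  set ov : ↑(↑K : Set (Fin d → ℤ)) := ⟨o, by simpa using ho⟩ with hov
  set yv : ↑(↑K : Set (Fin d → ℤ)) := ⟨y, by simpa using hy⟩ with hyv
  have hNn : (0:ℝ) ≤ N := le_of_lt hN
  have hβn : (0:ℝ) ≤ β := le_of_lt hβ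
  have hwnn : ∀ ω : Config G, 0 ≤ weight G U N β ω :=
    weight_nonneg U N β hNn hβn hUnn
  have hZnn : 0 ≤ Z G U N β := tsum_nonneg hwnn
  rcases eq_or_lt_of_le hZnn with hZ0 | hZpos
  · -- Z = 0 : prob = x / 0 = 0
    rw [prob, ← hZ0, div_zero, ENNReal.ofReal_zero]
    exact zero_le
  · -- Z > 0, hence weight is summable
    have hsumm : Summable (weight G U N β) := by
      by_contra hns
      rw [Z, tsum_eq_zero_of_not_summable hns] at hZpos
      exact lt_irrefl _ hZpos
    set A : Set (Config G) := connEvent ov yv with hA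
    have hSnn : 0 ≤ ∑' ω : A, weight G U N β (ω : Config G) :=
      tsum_nonneg fun ω => hwnn _
    have hZE : ENNReal.ofReal (Z G U N β)
        = ∑' ω : Config G, ENNReal.ofReal (weight G U N β ω) :=
      ENNReal.ofReal_tsum_of_nonneg hwnn hsumm
    have hSE : ENNReal.ofReal (∑' ω : A, weight G U N β (ω : Config G))
        = ∑' ω : A, ENNReal.ofReal (weight G U N β (ω : Config G)) :=
      ENNReal.ofReal_tsum_of_nonneg (fun ω => hwnn _) (hsumm.subtype A)
    -- step 1 : indicator bound
    set P : Loop G → Prop := fun γ => ov ∈ γ.val ∧ yv ∈ γ.val with hP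
    have hstep1 : ∑' ω : A, ENNReal.ofReal (weight G U N β (ω : Config G))
        ≤ ∑' ω : Config G, (∑ n : Fin ω.length,
            (if P (ω.get n) then (1:ℝ≥0∞) else 0) * ENNReal.ofReal (weight G U N β ω)) := by
      have h1 : ∀ ω : A, ENNReal.ofReal (weight G U N β (ω : Config G))
          ≤ ∑ n : Fin (ω : Config G).length,
            (if P ((ω : Config G).get n) then (1:ℝ≥0∞) else 0) *
              ENNReal.ofReal (weight G U N β (ω : Config G)) := by
        rintro ⟨ω, hωA⟩
        obtain ⟨ℓ, hℓω, hℓo, hℓy⟩ := hωA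
        rw [List.mem_iff_get] at hℓω
        obtain ⟨n₀, hn₀⟩ := hℓω
        have hterm : (if P (ω.get n₀) then (1:ℝ≥0∞) else 0) *
            ENNReal.ofReal (weight G U N β ω) = ENNReal.ofReal (weight G U N β ω) := by
          rw [if_pos (by rw [hn₀]; exact ⟨hℓo, hℓy⟩), one_mul]
        calc ENNReal.ofReal (weight G U N β ω)
            = (if P (ω.get n₀) then (1:ℝ≥0∞) else 0) *
              ENNReal.ofReal (weight G U N β ω) := hterm.symm
          _ ≤ ∑ n : Fin ω.length, (if P (ω.get n) then (1:ℝ≥0∞) else 0) *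
              ENNReal.ofReal (weight G U N β ω) :=
            Finset.single_le_sum (f := fun n : Fin ω.length =>
              (if P (ω.get n) then (1:ℝ≥0∞) else 0) * ENNReal.ofReal (weight G U N β ω))
              (fun n _ => zero_le) (Finset.mem_univ n₀)
      calc ∑' ω : A, ENNReal.ofReal (weight G U N β (ω : Config G))
          ≤ ∑' ω : A, (∑ n : Fin (ω : Config G).length,
              (if P ((ω : Config G).get n) then (1:ℝ≥0∞) else 0) *
                ENNReal.ofReal (weight G U N β (ω : Config G))) := ENNReal.tsum_le_tsum h1
        _ ≤ _ := ENNReal.tsum_comp_le_tsum_of_injective Subtype.val_injective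
            (fun ω => ∑ n : Fin ω.length,
              (if P (ω.get n) then (1:ℝ≥0∞) else 0) * ENNReal.ofReal (weight G U N β ω))
    -- step 2 : configSum
    have hstep2 := configSum_le (G := G) U N β hNn hβn hUnn hUsub P
    -- step 3 : loop sum to subtype then to series
    have hsub : ∑' γ : Loop G, (if P γ then (1:ℝ≥0∞) else 0) *
          ENNReal.ofReal (β ^ γ.len / (γ.len : ℝ) * ∏ x, U (γ.nx x))
        = ∑' γ : {γ : Loop G // P γ},
          ENNReal.ofReal (β ^ γ.1.len / (γ.1.len : ℝ) * ∏ x, U (γ.1.nx x)) := by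
      calc ∑' γ : Loop G, (if P γ then (1:ℝ≥0∞) else 0) *
            ENNReal.ofReal (β ^ γ.len / (γ.len : ℝ) * ∏ x, U (γ.nx x))
          = ∑' γ : Loop G, Set.indicator {γ : Loop G | P γ}
              (fun γ => ENNReal.ofReal (β ^ γ.len / (γ.len : ℝ) * ∏ x, U (γ.nx x))) γ := by
            apply tsum_congr
            intro γ
            by_cases h : P γ
            · rw [if_pos h, one_mul]
              exact (Set.indicator_of_mem (show γ ∈ {γ : Loop G | P γ} from h)
                (fun γ => ENNReal.ofReal (β ^ γ.len / (γ.len : ℝ) * ∏ x, U (γ.nx x)))).symm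
            · rw [if_neg h, zero_mul]
              exact (Set.indicator_of_notMem (show γ ∉ {γ : Loop G | P γ} from h)
                (fun γ => ENNReal.ofReal (β ^ γ.len / (γ.len : ℝ) * ∏ x, U (γ.nx x)))).symm
        _ = ∑' γ : ↑{γ : Loop G | P γ},
              ENNReal.ofReal (β ^ (γ:Loop G).len / ((γ:Loop G).len : ℝ) * ∏ x, U ((γ:Loop G).nx x)) :=
            (tsum_subtype {γ : Loop G | P γ}
              (fun γ => ENNReal.ofReal (β ^ γ.len / (γ.len : ℝ) * ∏ x, U (γ.nx x)))).symm
        _ = ∑' γ : {γ : Loop G // P γ},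
              ENNReal.ofReal (β ^ γ.1.len / (γ.1.len : ℝ) * ∏ x, U (γ.1.nx x)) := rfl
    have hstep3 : ∑' γ : {γ : Loop G // P γ},
          ENNReal.ofReal (β ^ γ.1.len / (γ.1.len : ℝ) * ∏ x, U (γ.1.nx x))
        ≤ ∑' k : ℕ, if dist1 o y ≤ k then ENNReal.ofReal ((2 * d * β) ^ k * chi d U k) else 0 :=
      loopSum_le hd U hU0 hUnn β hβ o y (by simpa using ho) (by simpa using hy)
    -- combine
    have hmain : ∑' ω : A, ENNReal.ofReal (weight G U N β (ω : Config G))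
        ≤ (ENNReal.ofReal (N / 2) *
            ∑' k : ℕ, if dist1 o y ≤ k then ENNReal.ofReal ((2 * d * β) ^ k * chi d U k) else 0) *
          ENNReal.ofReal (Z G U N β) := by
      rw [hZE]
      calc ∑' ω : A, ENNReal.ofReal (weight G U N β (ω : Config G))
          ≤ ∑' ω : Config G, (∑ n : Fin ω.length,
              (if P (ω.get n) then (1:ℝ≥0∞) else 0) * ENNReal.ofReal (weight G U N β ω)) := hstep1
        _ ≤ ENNReal.ofReal (N / 2) *
            (∑' γ : Loop G, (if P γ then (1:ℝ≥0∞) else 0) *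
              ENNReal.ofReal (β ^ γ.len / (γ.len : ℝ) * ∏ x, U (γ.nx x))) *
            ∑' ω : Config G, ENNReal.ofReal (weight G U N β ω) := hstep2
        _ ≤ (ENNReal.ofReal (N / 2) *
              ∑' k : ℕ, if dist1 o y ≤ k then ENNReal.ofReal ((2 * d * β) ^ k * chi d U k) else 0) *
            ∑' ω : Config G, ENNReal.ofReal (weight G U N β ω) := by
          apply mul_le_mul_left
          apply mul_le_mul_right
          rw [hsub]
          exact hstep3
    rw [prob, ENNReal.ofReal_div_of_pos hZpos]
    rw [ENNReal.div_le_iff (by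
        rw [← ENNReal.ofReal_pos] at hZpos
        exact ne_of_gt hZpos) ENNReal.ofReal_ne_top]
    rw [hSE]
    exact hmain
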